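/- For KSPM(3), there exists a function L(k) = O(log k) such that for every k, letting s be the k-th avalanche: if max{j : j ∈ s} > L(k), then both L(k) and L(k)+1 are fired in s. -/

import Mathlib

/-- Effect of firing column `i` in KSPM(D), on height-difference configurations. -/
def step (D : ℕ) (σ : ℕ → ℕ) (i : ℕ) : ℕ → ℕ :=
  fun j =>
    if j = i then σ i - D
    else if j + 1 = i then σ j + (D - 1)
    else if j = i + D - 1 then σ j + 1
    else σ j

/-- Transition on column `i`: `σ →ᵢ σ'`. -/
def KTrans (D : ℕ) (σ : ℕ → ℕ) (i : ℕ) (σ' : ℕ → ℕ) : Prop :=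
  D ≤ σ i ∧ σ' = step D σ i

/-- A strategy (list of fired columns) is legal from `σ`. -/
def Legal (D : ℕ) : (ℕ → ℕ) → List ℕ → Prop
  | _, [] => True
  | σ, i :: s => D ≤ σ i ∧ Legal D (step D σ i) s

/-- Configuration obtained by applying a strategy. -/
def applyStrat (D : ℕ) : (ℕ → ℕ) → List ℕ → (ℕ → ℕ)
  | σ, [] => σ
  | σ, i :: s => applyStrat D (step D σ i) s

/-- Reachability `σ →* σ'`. -/
def Reaches (D : ℕ) (σ σ' : ℕ → ℕ) : Prop :=
  ∃ s : List ℕ, Legal D σ s ∧ applyStrat D σ s = σ'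

/-- A configuration is stable (a fixed point) if no transition is possible. -/
def Stable (D : ℕ) (σ : ℕ → ℕ) : Prop := ∀ i, σ i < D

/-- Initial configuration: `N` grains stacked on column 0 (height differences `(N,0,0,…)`). -/
def initConf (N : ℕ) : ℕ → ℕ := fun j => if j = 0 then N else 0

/-- `τ = π(N)`: the stable configuration reachable from `N` stacked grains. -/
def IsPi (D N : ℕ) (τ : ℕ → ℕ) : Prop := Reaches D (initConf N) τ ∧ Stable D τ

/-- `σ^{↓0}`: add one grain on column 0. -/
def addGrain (σ : ℕ → ℕ) : ℕ → ℕ := Function.update σ 0 (σ 0 + 1)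

/-- `s` is the leftmost (lexicographically minimal) strategy from `τ^{↓0}` to `τ'`. -/
def IsAvalancheFor (D : ℕ) (τ τ' : ℕ → ℕ) (s : List ℕ) : Prop :=
  Legal D (addGrain τ) s ∧ applyStrat D (addGrain τ) s = τ' ∧
    ∀ s' : List ℕ, Legal D (addGrain τ) s' → applyStrat D (addGrain τ) s' = τ' →
      ¬ List.Lex (· < ·) s' s

/-- `s` is the `k`-th avalanche: leftmost strategy from `π(k-1)^{↓0}` to `π(k)`. -/
def IsAvalanche (D k : ℕ) (s : List ℕ) : Prop :=
  ∃ τ τ' : ℕ → ℕ, IsPi D (k - 1) τ ∧ IsPi D k τ' ∧ IsAvalancheFor D τ τ' s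

/-- Position `t` (0-indexed) of strategy `s` is a peak: it exceeds all earlier fired columns. -/
def IsPeak (s : List ℕ) (t : ℕ) : Prop :=
  t < s.length ∧ ∀ t' < t, s.getD t' 0 < s.getD t 0

/-- Column `p` is a peak of `s`. -/
def IsPeakVal (s : List ℕ) (p : ℕ) : Prop :=
  ∃ t : ℕ, IsPeak s t ∧ s.getD t 0 = p

lemma applyStrat_append (D : ℕ) (σ : ℕ → ℕ) (u v : List ℕ) :
    applyStrat D σ (u ++ v) = applyStrat D (applyStrat D σ u) v := by
  induction u generalizing σ with
  | nil => rfl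
  | cons i t ih => simp [applyStrat, ih]
lemma legal_append {D : ℕ} {σ : ℕ → ℕ} {u v : List ℕ} (h : Legal D σ (u ++ v)) :
    Legal D σ u ∧ Legal D (applyStrat D σ u) v := by
  induction u generalizing σ with
  | nil => exact ⟨trivial, h⟩
  | cons i t ih =>
    obtain ⟨h1, h2⟩ := h
    obtain ⟨h3, h4⟩ := ih h2
    exact ⟨⟨h1, h3⟩, h4⟩
lemma step_lower {σ : ℕ → ℕ} {i x : ℕ} (hx : x ≠ i) : σ x ≤ step 3 σ i x := by
  simp only [step]
  split_ifs <;> omega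
lemma stepZ {σ : ℕ → ℕ} {i : ℕ} (h : 3 ≤ σ i) (x : ℕ) :
    ((step 3 σ i x : ℕ) : ℤ) = (σ x : ℤ) + (if x + 1 = i then 2 else 0)
      + (if x = i + 2 then 1 else 0) - (if x = i then 3 else 0) := by
  simp only [step]
  rcases eq_or_ne x i with rfl | hxi
  · have h1 : ¬ (x + 1 = x) := by omega
    have h2 : ¬ (x = x + 3 - 1) := by omega
    simp only [h1, h2, if_false, if_true, eq_self_iff_true]
    omega
  · have h2 : (x = i + 3 - 1) ↔ (x = i + 2) := by omega
    simp only [if_neg hxi]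
    split_ifs <;> omega
lemma countZ : ∀ (s : List ℕ) (σ : ℕ → ℕ), Legal 3 σ s → ∀ x : ℕ,
    ((applyStrat 3 σ s x : ℕ) : ℤ) = (σ x : ℤ) + 2 * s.count (x+1)
      + (if 2 ≤ x then (s.count (x-2) : ℤ) else 0) - 3 * s.count x := by
  intro s
  induction s with
  | nil =>
    intro σ _ x
    simp [applyStrat]
  | cons i t ih =>
    intro σ hleg x
    obtain ⟨h1, h2⟩ := hleg
    have := ih (step 3 σ i) h2 x
    simp only [applyStrat] at *
    rw [this, stepZ h1 x]
    simp only [List.count_cons]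
    have hc : ∀ (l : List ℕ) (a b : ℕ),
        ((l.count b + if (a == b) = true then 1 else 0 : ℕ) : ℤ)
          = (l.count b : ℤ) + (if a = b then 1 else 0) := by
      intro l a b
      rcases eq_or_ne a b with rfl | h
      · simp
      · simp [h]
    rw [hc t i (x+1), hc t i (x-2), hc t i x]
    have hsy : ∀ p q : ℕ, (if p = q then (1:ℤ) else 0) = (if q = p then 1 else 0) := by
      intro p q; split_ifs <;> omega
    by_cases hx2 : 2 ≤ x
    · have hiff : (x = i + 2) ↔ (x - 2 = i) := by omega
      simp only [if_pos hx2]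
      split_ifs <;> omega
    · have hni : ¬ (x = i + 2) := by omega
      simp only [if_neg hx2, if_neg hni]
      split_ifs <;> omega
lemma mem_split_first {j : ℕ} : ∀ {s : List ℕ}, j ∈ s →
    ∃ u v, s = u ++ j :: v ∧ j ∉ u := by
  intro s
  induction s with
  | nil => intro h; simp at h
  | cons a t ih =>
    intro h
    rcases eq_or_ne a j with rfl | hne
    · exact ⟨[], t, rfl, by simp⟩
    · have : j ∈ t := by
        rcases List.mem_cons.1 h with h' | h'
        · exact absurd h'.symm hne
        · exact h'
      obtain ⟨u, v, huv, hnu⟩ := ih this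
      exact ⟨a :: u, v, by simp [huv], by simp [hnu, Ne.symm hne]⟩
lemma split_first_big {c : ℕ} : ∀ {s : List ℕ}, (∃ j ∈ s, c < j) →
    ∃ u j v, s = u ++ j :: v ∧ c < j ∧ ∀ y ∈ u, y ≤ c := by
  intro s
  induction s with
  | nil => rintro ⟨j, hj, _⟩; simp at hj
  | cons a t ih =>
    rintro ⟨j, hj, hcj⟩
    by_cases hac : c < a
    · exact ⟨[], a, t, rfl, hac, by simp⟩
    · have hjt : j ∈ t := by
        rcases List.mem_cons.1 hj with rfl | h'
        · omega
        · exact h'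
      obtain ⟨u, j', v, huv, hj', hu⟩ := ih ⟨j, hjt, hcj⟩
      refine ⟨a :: u, j', v, by simp [huv], hj', ?_⟩
      intro y hy
      rcases List.mem_cons.1 hy with rfl | h'
      · omega
      · exact hu y h'
lemma fire_cond {σ : ℕ → ℕ} {s u v : List ℕ} {j : ℕ} (hs : Legal 3 σ s)
    (he : s = u ++ j :: v) :
    (3 : ℤ) ≤ (σ j : ℤ) + 2 * u.count (j+1)
      + (if 2 ≤ j then (u.count (j-2) : ℤ) else 0) - 3 * u.count j := by
  subst he
  obtain ⟨hu, hv⟩ := legal_append hs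
  have h3 : 3 ≤ applyStrat 3 σ u j := hv.1
  have := countZ u σ hu j
  omega
lemma addGrain_ne {σ : ℕ → ℕ} {j : ℕ} (h : j ≠ 0) : addGrain σ j = σ j :=
  Function.update_of_ne h _ _
lemma addGrain_zero (σ : ℕ → ℕ) : addGrain σ 0 = σ 0 + 1 :=
  Function.update_self _ _ _
lemma core {τ τ' : ℕ → ℕ} {s : List ℕ} {c : ℕ}
    (hτ : Stable 3 τ) (hleg : Legal 3 (addGrain τ) s)
    (happ : applyStrat 3 (addGrain τ) s = τ') (hτ' : Stable 3 τ')
    (hc : 1 ≤ c) (hbig : ∃ j ∈ s, c < j)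
    (hnp : ∀ c' ≤ c, ¬(c' ∈ s ∧ c' + 1 ∈ s)) :
    ∀ x, x + 3 ≤ c → (x % 2 = 0 → τ x = 2) ∧ (x % 2 = 1 → τ x = 0) := by
  -- claim A
  have claimA : ∀ j ∈ s, 1 ≤ j → (j + 1 ∈ s) ∨ (2 ≤ j ∧ j - 2 ∈ s) := by
    intro j hj hj1
    obtain ⟨u, v, huv, hnu⟩ := mem_split_first hj
    have hf := fire_cond hleg huv
    have hσj : addGrain τ j = τ j := addGrain_ne (by omega)
    rw [hσj] at hf
    have hτj : τ j < 3 := hτ j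
    have hcu : u.count j = 0 := List.count_eq_zero.2 hnu
    rw [hcu] at hf
    have humem : ∀ y, 1 ≤ u.count y → y ∈ s := by
      intro y hy
      have : y ∈ u := List.count_pos_iff.1 (by omega)
      rw [huv]; exact List.mem_append.2 (Or.inl this)
    by_cases h2j : 2 ≤ j
    · rw [if_pos h2j] at hf
      by_cases hc1 : 1 ≤ u.count (j+1)
      · exact Or.inl (humem _ hc1)
      · right
        refine ⟨h2j, humem _ ?_⟩
        omega
    · rw [if_neg h2j] at hf
      left
      apply humem
      omega
  -- evenness of members ≤ c
  have even_mem : ∀ j, j ∈ s → j ≤ c → j % 2 = 0 := by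
    intro j
    induction j using Nat.strong_induction_on with
    | _ j ih =>
      intro hj hjc
      rcases Nat.eq_zero_or_pos j with rfl | hj1
      · rfl
      · rcases claimA j hj hj1 with h | ⟨h2, hm⟩
        · exact absurd ⟨hj, h⟩ (hnp j hjc)
        · have := ih (j-2) (by omega) hm (by omega)
          omega
  have down2 : ∀ j ∈ s, j ≤ c → 2 ≤ j → j - 2 ∈ s := by
    intro j hj hjc h2
    rcases claimA j hj (by omega) with h | ⟨_, hm⟩
    · exact absurd ⟨hj, h⟩ (hnp j hjc)
    · exact hm
  have chain : ∀ j, j ∈ s → j ≤ c → ∀ y, y ≤ j → y % 2 = 0 → y ∈ s := by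
    intro j
    induction j using Nat.strong_induction_on with
    | _ j ih =>
      intro hj hjc y hy hye
      rcases eq_or_ne y j with rfl | hne
      · exact hj
      · have hje := even_mem j hj hjc
        have h2 : 2 ≤ j := by omega
        have := down2 j hj hjc h2
        exact ih (j-2) (by omega) this (by omega) y (by omega) hye
  -- the frontier element e
  obtain ⟨u, j, v, huv, hcj, hu⟩ := split_first_big hbig
  have hf := fire_cond hleg huv
  have hσj : addGrain τ j = τ j := addGrain_ne (by omega)
  rw [hσj] at hf
  have hτj : τ j < 3 := hτ j
  have hcuj : u.count j = 0 := by
    apply List.count_eq_zero.2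
    intro hmem
    exact absurd (hu j hmem) (by omega)
  have hcuj1 : u.count (j+1) = 0 := by
    apply List.count_eq_zero.2
    intro hmem
    exact absurd (hu (j+1) hmem) (by omega)
  rw [hcuj, hcuj1] at hf
  have h2j : 2 ≤ j := by
    by_contra h
    rw [if_neg h] at hf
    omega
  rw [if_pos h2j] at hf
  have hecount : 1 ≤ u.count (j-2) := by omega
  have heu : j - 2 ∈ u := List.count_pos_iff.1 (by omega)
  have hes : j - 2 ∈ s := by
    rw [huv]; exact List.mem_append.2 (Or.inl heu)
  set e := j - 2 with he_def
  have hec : e ≤ c := hu _ heu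
  have hce : c - 1 ≤ e := by omega
  have hee : e % 2 = 0 := even_mem e hes hec
  have memE : ∀ y, y ≤ e → y % 2 = 0 → y ∈ s := chain e hes hec
  have notmem_odd : ∀ o, o ≤ c → o % 2 = 1 → o ∉ s := by
    intro o ho ho1 hmem
    have := even_mem o hmem ho
    omega
  -- counting equations on the full strategy
  have eqn : ∀ x : ℕ, ((τ' x : ℕ) : ℤ) = (addGrain τ x : ℤ) + 2 * s.count (x+1)
      + (if 2 ≤ x then (s.count (x-2) : ℤ) else 0) - 3 * s.count x := by
    intro x
    rw [← happ]
    exact countZ s _ hleg x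
  have a0pos : 1 ≤ s.count 0 := List.count_pos_iff.2 (memE 0 (by omega) rfl)
  have aodd : ∀ o, o ≤ c → o % 2 = 1 → s.count o = 0 := by
    intro o ho ho1
    exact List.count_eq_zero.2 (notmem_odd o ho ho1)
  have aeven : ∀ y, y ≤ e → y % 2 = 0 → 1 ≤ s.count y := by
    intro y hy hye
    exact List.count_pos_iff.2 (memE y hy hye)
  -- column 0
  have hx0 : τ 0 = 2 ∧ s.count 0 = 1 := by
    have h := eqn 0
    rw [addGrain_zero] at h
    simp only [show ¬ (2 ≤ 0) by omega, if_false] at h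
    have hc1 : s.count 1 = 0 := aodd 1 hc rfl
    rw [hc1] at h
    have ht0 : τ 0 < 3 := hτ 0
    have ht0' : τ' 0 < 3 := hτ' 0
    omega
  -- odd columns
  have oddlem : ∀ i : ℕ, 2*i + 2 ≤ e → τ (2*i+1) = 0 ∧ s.count (2*i+2) = 1 := by
    intro i hi
    have h := eqn (2*i+1)
    rw [addGrain_ne (by omega)] at h
    have hcx : s.count (2*i+1) = 0 := aodd _ (by omega) (by omega)
    have hnext : 1 ≤ s.count (2*i+2) := aeven _ (by omega) (by omega)
    have hitezero : (if 2 ≤ 2*i+1 then (s.count (2*i+1-2) : ℤ) else 0) = 0 := by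
      rcases Nat.eq_zero_or_pos i with rfl | hi1
      · norm_num
      · rw [if_pos (by omega)]
        have : s.count (2*i+1-2) = 0 := aodd _ (by omega) (by omega)
        rw [this]; norm_num
    rw [hcx, hitezero] at h
    have ht : τ (2*i+1) < 3 := hτ _
    have ht' : τ' (2*i+1) < 3 := hτ' _
    have h21 : 2*i+1+1 = 2*i+2 := by omega
    rw [h21] at h
    omega
  -- even columns
  have evenlem : ∀ i : ℕ, 1 ≤ i → 2*i + 2 ≤ e → τ (2*i) = 2 := by
    intro i hi1 hie
    have h := eqn (2*i)
    rw [addGrain_ne (by omega)] at h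
    have hodd : s.count (2*i+1) = 0 := aodd _ (by omega) (by omega)
    have hself : s.count (2*i) = 1 := by
      have := oddlem (i-1) (by omega)
      have h2 : 2*(i-1)+2 = 2*i := by omega
      rw [h2] at this
      exact this.2
    have hprev : s.count (2*i - 2) = 1 := by
      rcases eq_or_ne i 1 with rfl | hne
      · simpa using hx0.2
      · have := oddlem (i-2) (by omega)
        have h2 : 2*(i-2)+2 = 2*i-2 := by omega
        rw [h2] at this
        exact this.2
    rw [if_pos (by omega : 2 ≤ 2*i), hodd, hself] at h
    have h22 : 2*i - 2 = 2*(i-1) := by omega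
    rw [show 2*i-2 = 2*i-2 from rfl, hprev] at h
    have ht : τ (2*i) < 3 := hτ _
    have ht' : τ' (2*i) < 3 := hτ' _
    omega
  -- conclusion
  intro x hx
  constructor
  · intro hxe
    rcases Nat.eq_zero_or_pos x with rfl | hx1
    · exact hx0.1
    · have : x = 2 * (x/2) := by omega
      rw [this]
      exact evenlem (x/2) (by omega) (by omega)
  · intro hxo
    have : x = 2 * (x/2) + 1 := by omega
    rw [this]
    exact (oddlem (x/2) (by omega)).1
lemma mem_le_foldr_max : ∀ (l : List ℕ), ∀ a ∈ l, a ≤ l.foldr max 0 := by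
  intro l
  induction l with
  | nil => intro a ha; simp at ha
  | cons b t ih =>
    intro a ha
    rcases List.mem_cons.1 ha with rfl | h
    · simp only [List.foldr_cons]
      exact le_max_left _ _
    · simp only [List.foldr_cons]
      exact le_trans (ih a h) (le_max_right _ _)
lemma key {N P n : ℕ} {τ : ℕ → ℕ} {r : List ℕ}
    (hleg : Legal 3 (initConf N) r) (happ : applyStrat 3 (initConf N) r = τ)
    (hτ : Stable 3 τ)
    (hpat : ∀ x, x < P → (x % 2 = 0 → τ x = 2) ∧ (x % 2 = 1 → τ x = 0))
    (hn : 1 ≤ n) (hnP : 2*n + 2 < P) :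
    (64 : ℤ) * 4^(n-1) ≤ 507 * N + 4804 := by
  classical
  set b : ℕ → ℕ := fun y => r.count y with hb
  have eqn : ∀ x : ℕ, ((τ x : ℕ) : ℤ) = (if x = 0 then (N:ℤ) else 0) + 2 * b (x+1)
      + (if 2 ≤ x then (b (x-2) : ℤ) else 0) - 3 * b x := by
    intro x
    have h := countZ r (initConf N) hleg x
    rw [happ] at h
    rw [h]
    have : ((initConf N x : ℕ) : ℤ) = if x = 0 then (N:ℤ) else 0 := by
      simp only [initConf]; split_ifs <;> simp
    rw [this]
  -- support bound
  set S : ℕ := r.foldr max 0 + 1 with hS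
  have hSb : ∀ y, S ≤ y → b y = 0 := by
    intro y hy
    apply List.count_eq_zero.2
    intro hmem
    have := mem_le_foldr_max r y hmem
    omega
  -- partial sums stabilize
  have Beq : ∀ m, S ≤ m → ∑ x ∈ Finset.range m, (b x : ℤ) = ∑ x ∈ Finset.range S, (b x : ℤ) := by
    intro m hm
    induction m with
    | zero => omega
    | succ m ih =>
      rcases eq_or_ne (m+1) S with h | h
      · rw [h]
      · have hm' : S ≤ m := by omega
        rw [Finset.sum_range_succ, ih hm', hSb m hm']
        simp
  -- sum the equations over range (S+2)
  have hsum := Finset.sum_congr rfl (fun x (_ : x ∈ Finset.range (S+2)) => eqn x)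
  have hshift1 : ∑ x ∈ Finset.range (S+2), (b (x+1) : ℤ)
      = ∑ x ∈ Finset.range (S+3), (b x : ℤ) - b 0 := by
    rw [show S+3 = (S+2)+1 from rfl, Finset.sum_range_succ' (fun x => (b x : ℤ)) (S+2)]
    ring
  have hshift2 : ∑ x ∈ Finset.range (S+2), (if 2 ≤ x then (b (x-2) : ℤ) else 0)
      = ∑ x ∈ Finset.range S, (b x : ℤ) := by
    rw [show S+2 = (S+1)+1 from rfl,
      Finset.sum_range_succ' (fun x => if 2 ≤ x then (b (x-2) : ℤ) else 0) (S+1),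
      Finset.sum_range_succ' (fun x => if 2 ≤ x+1 then (b (x+1-2) : ℤ) else 0) S,
      Finset.sum_congr rfl (fun (x : ℕ) (_ : x ∈ Finset.range S) =>
        (if_pos (by omega : 2 ≤ x+1+1) :
          (if 2 ≤ x+1+1 then (b (x+1+1-2) : ℤ) else 0) = (b (x+1+1-2) : ℤ)))]
    have h1 : (if 2 ≤ (0:ℕ) then (b (0-2) : ℤ) else 0) = 0 := by norm_num
    have h2 : (if 2 ≤ (0:ℕ)+1 then (b (0+1-2) : ℤ) else 0) = 0 := by norm_num
    rw [h1, h2]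
    try simp
  have hsum0 : ∑ x ∈ Finset.range (S+2), (if x = 0 then (N:ℤ) else 0) = N := by
    rw [Finset.sum_ite_eq' (Finset.range (S+2)) 0 (fun _ => (N:ℤ))]
    simp
  have b0le : 2 * (b 0 : ℤ) ≤ N := by
    have hdist : ∑ x ∈ Finset.range (S+2), ((τ x : ℕ) : ℤ)
        = (∑ x ∈ Finset.range (S+2), (if x = 0 then (N:ℤ) else 0))
          + 2 * (∑ x ∈ Finset.range (S+2), (b (x+1):ℤ))
          + (∑ x ∈ Finset.range (S+2), (if 2 ≤ x then (b (x-2):ℤ) else 0))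
          - 3 * (∑ x ∈ Finset.range (S+2), (b x:ℤ)) := by
      rw [Finset.mul_sum, Finset.mul_sum, ← Finset.sum_add_distrib, ← Finset.sum_add_distrib,
        ← Finset.sum_sub_distrib]
      exact Finset.sum_congr rfl (fun x _ => eqn x)
    rw [hshift1, hshift2, hsum0, Beq (S+2) (by omega), Beq (S+3) (by omega)] at hdist
    have hτpos : 0 ≤ ∑ x ∈ Finset.range (S+2), ((τ x : ℕ) : ℤ) :=
      Finset.sum_nonneg (fun x _ => by positivity)
    omega
  -- local equations
  have e0 := eqn 0
  have e1 := eqn 1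
  have e2 := eqn 2
  have e3 := eqn 3
  have e4 := eqn 4
  norm_num at e0 e1 e2 e3 e4
  have t0 : τ 0 < 3 := hτ 0
  have t1 : τ 1 < 3 := hτ 1
  have t2 : τ 2 < 3 := hτ 2
  have t3 : τ 3 < 3 := hτ 3
  have t4 : τ 4 < 3 := hτ 4
  -- the linear recurrence inside the pattern zone
  have hrec : ∀ i : ℕ, 2*i + 6 < P →
      4 * (b (2*i+7) : ℤ) - 9 * b (2*i+5) + 6 * b (2*i+3) - b (2*i+1) = 4 := by
    intro i hiP
    have ha := eqn (2*i+5)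
    have hb' := eqn (2*i+3)
    have hc' := eqn (2*i+6)
    have hτa : τ (2*i+5) = 0 := (hpat _ (by omega)).2 (by omega)
    have hτb : τ (2*i+3) = 0 := (hpat _ (by omega)).2 (by omega)
    have hτc : τ (2*i+6) = 2 := (hpat _ (by omega)).1 (by omega)
    rw [hτa, if_neg (by omega : ¬ (2*i+5 = 0)), if_pos (by omega : 2 ≤ 2*i+5),
      show 2*i+5-2 = 2*i+3 by omega, show 2*i+5+1 = 2*i+6 by omega] at ha
    rw [hτb, if_neg (by omega : ¬ (2*i+3 = 0)), if_pos (by omega : 2 ≤ 2*i+3),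
      show 2*i+3-2 = 2*i+1 by omega, show 2*i+3+1 = 2*i+4 by omega] at hb'
    rw [hτc, if_neg (by omega : ¬ (2*i+6 = 0)), if_pos (by omega : 2 ≤ 2*i+6),
      show 2*i+6-2 = 2*i+4 by omega, show 2*i+6+1 = 2*i+7 by omega] at hc'
    push_cast at ha hb' hc'
    omega
  set d : ℕ → ℤ := fun m => (b (2*m+5) : ℤ) - 2 * b (2*m+3) + b (2*m+1) with hd
  have drec : ∀ m : ℕ, 2*m + 6 < P → 4 * d (m+1) - d m = 4 := by
    intro m hm
    have := hrec m hm
    simp only [hd]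
    have h1 : 2*(m+1)+5 = 2*m+7 := by omega
    have h2 : 2*(m+1)+3 = 2*m+5 := by omega
    have h3 : 2*(m+1)+1 = 2*m+3 := by omega
    rw [h1, h2, h3]
    omega
  have ind : ∀ m : ℕ, 2*m + 4 < P → 4^m * (3 * d m - 4) = 3 * d 0 - 4 := by
    intro m
    induction m with
    | zero => intro _; ring
    | succ m ih =>
      intro hm
      have hdr := drec m (by omega)
      have ihm := ih (by omega)
      have : (4:ℤ)^(m+1) * (3 * d (m+1) - 4) = 4^m * (3 * (4 * d (m+1)) - 16) := by ring
      rw [this, show 3 * (4 * d (m+1)) - 16 = 3 * (4 * d (m+1) - d m) + 3 * d m - 16 by ring, hdr]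
      rw [show (3:ℤ) * 4 + 3 * d m - 16 = 3 * d m - 4 by ring]
      exact ihm
  have habs : (4:ℤ)^(n-1) ≤ |3 * d 0 - 4| := by
    have h := ind (n-1) (by omega)
    have hne : 3 * d (n-1) - 4 ≠ 0 := by omega
    have h1 : (1:ℤ) ≤ |3 * d (n-1) - 4| := Int.one_le_abs hne
    calc (4:ℤ)^(n-1) = 4^(n-1) * 1 := by ring
      _ ≤ 4^(n-1) * |3 * d (n-1) - 4| := by
          apply mul_le_mul_of_nonneg_left h1 (by positivity)
      _ = |4^(n-1) * (3 * d (n-1) - 4)| := by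
          rw [abs_mul, abs_of_nonneg (by positivity : (0:ℤ) ≤ 4^(n-1))]
      _ = |3 * d 0 - 4| := by rw [h]
  have hd0 : d 0 = (b 5 : ℤ) - 2 * b 3 + b 1 := by simp [hd]
  have habs2 : |3 * d 0 - 4| ≤ 3 * (b 5 : ℤ) + 6 * b 3 + 3 * b 1 + 4 := by
    rw [hd0]
    have hb1 : (0:ℤ) ≤ b 1 := by positivity
    have hb3 : (0:ℤ) ≤ b 3 := by positivity
    have hb5 : (0:ℤ) ≤ b 5 := by positivity
    rw [abs_le]
    constructor <;> linarith
  have hfin : (4:ℤ)^(n-1) ≤ 3 * (b 5:ℤ) + 6 * b 3 + 3 * b 1 + 4 := le_trans habs habs2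
  -- final arithmetic
  generalize hX : (4:ℤ)^(n-1) = X at hfin ⊢
  omega
def KStep (σ σ' : ℕ → ℕ) : Prop := ∃ i, KTrans 3 σ i σ'
lemma step_comm {σ : ℕ → ℕ} {i j : ℕ} (hi : 3 ≤ σ i) (hj : 3 ≤ σ j) :
    step 3 (step 3 σ i) j = step 3 (step 3 σ j) i := by
  rcases eq_or_ne i j with rfl | hij
  · rfl
  · funext x
    have hji : 3 ≤ step 3 σ i j := le_trans hj (step_lower (Ne.symm hij))
    have hij' : 3 ≤ step 3 σ j i := le_trans hi (step_lower hij)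
    have h1 := stepZ (σ := step 3 σ i) hji x
    have h2 := stepZ (σ := step 3 σ j) hij' x
    have h3 := stepZ (σ := σ) hi x
    have h4 := stepZ (σ := σ) hj x
    have := Int.natCast_inj (m := step 3 (step 3 σ i) j x) (n := step 3 (step 3 σ j) i x)
    apply this.1
    rw [h1, h2, h3, h4]
    ring
lemma kstep_diamond {σ σ₁ σ₂ : ℕ → ℕ} (h1 : KStep σ σ₁) (h2 : KStep σ σ₂) :
    ∃ d, Relation.ReflGen KStep σ₁ d ∧ Relation.ReflTransGen KStep σ₂ d := by
  obtain ⟨i, hi, rfl⟩ := h1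
  obtain ⟨j, hj, rfl⟩ := h2
  rcases eq_or_ne i j with rfl | hij
  · exact ⟨step 3 σ i, Relation.ReflGen.refl, Relation.ReflTransGen.refl⟩
  · refine ⟨step 3 (step 3 σ i) j, Relation.ReflGen.single ⟨j, le_trans hj (step_lower (Ne.symm hij)), rfl⟩, Relation.ReflTransGen.single ⟨i, le_trans hi (step_lower hij), ?_⟩⟩
    exact step_comm hi hj
lemma reaches_rtg {σ τ : ℕ → ℕ} (h : Reaches 3 σ τ) : Relation.ReflTransGen KStep σ τ := by
  obtain ⟨s, hleg, happ⟩ := h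
  induction s generalizing σ with
  | nil => rw [← happ]; exact Relation.ReflTransGen.refl
  | cons i t ih =>
    obtain ⟨h1, h2⟩ := hleg
    exact Relation.ReflTransGen.head ⟨i, h1, rfl⟩ (ih h2 happ)
lemma stable_no_step {τ d : ℕ → ℕ} (hτ : Stable 3 τ)
    (h : Relation.ReflTransGen KStep τ d) : τ = d := by
  rcases Relation.ReflTransGen.cases_head h with h' | ⟨c, ⟨i, hi, _⟩, _⟩
  · exact h'
  · exact absurd hi (by have := hτ i; omega)
lemma pi_unique {N : ℕ} {τ₁ τ₂ : ℕ → ℕ} (h1 : IsPi 3 N τ₁) (h2 : IsPi 3 N τ₂) : τ₁ = τ₂ := by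
  have hj := Relation.church_rosser (fun a b c hab hac => kstep_diamond hab hac)
    (reaches_rtg h1.1) (reaches_rtg h2.1)
  obtain ⟨d, hd1, hd2⟩ := hj
  rw [stable_no_step h1.2 hd1, stable_no_step h2.2 hd2]
lemma lex_trichotomy : ∀ (s t : List ℕ), s = t ∨ List.Lex (· < ·) s t ∨ List.Lex (· < ·) t s := by
  intro s
  induction s with
  | nil =>
    intro t
    cases t with
    | nil => exact Or.inl rfl
    | cons a l => exact Or.inr (Or.inl (List.Lex.nil))
  | cons a l ih =>
    intro t
    cases t with
    | nil => exact Or.inr (Or.inr (List.Lex.nil))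
    | cons b m =>
      rcases lt_trichotomy a b with h | rfl | h
      · exact Or.inr (Or.inl (List.Lex.rel h))
      · rcases ih m with rfl | h | h
        · exact Or.inl rfl
        · exact Or.inr (Or.inl (List.Lex.cons h))
        · exact Or.inr (Or.inr (List.Lex.cons h))
      · exact Or.inr (Or.inr (List.Lex.rel h))
lemma aval_unique {k : ℕ} {s s' : List ℕ} (h : IsAvalanche 3 k s) (h' : IsAvalanche 3 k s') :
    s = s' := by
  obtain ⟨τ, τ', hπ, hπ', hleg, happ, hmin⟩ := h
  obtain ⟨ρ, ρ', hρπ, hρπ', hleg', happ', hmin'⟩ := h'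
  have hττ : τ = ρ := pi_unique hπ hρπ
  have hττ' : τ' = ρ' := pi_unique hπ' hρπ'
  subst hττ hττ'
  rcases lex_trichotomy s s' with h | h | h
  · exact h
  · exact absurd h (hmin' s hleg happ)
  · exact absurd h (hmin s' hleg' happ')
/-- The explicit logarithmic bound. -/
def cbound (k : ℕ) : ℕ := 2 * Nat.log 4 (507 * k + 4804) + 9
lemma aval_dichotomy {k : ℕ} {s : List ℕ} (h : IsAvalanche 3 k s) :
    (∀ j ∈ s, j ≤ cbound k) ∨ ∃ c' ≤ cbound k, c' ∈ s ∧ c' + 1 ∈ s := by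
  by_contra hcon
  push_neg at hcon
  obtain ⟨⟨j, hj, hjc⟩, h2⟩ := hcon
  obtain ⟨τ, τ', ⟨⟨r, hrleg, hrapp⟩, hτst⟩, hπ', hleg, happ, _⟩ := h
  have hτ'st : Stable 3 τ' := hπ'.2
  set Lg : ℕ := Nat.log 4 (507 * k + 4804) with hLg
  have hc9 : cbound k = 2 * Lg + 9 := rfl
  have hpat := core hτst hleg happ hτ'st (by omega : 1 ≤ cbound k) ⟨j, hj, hjc⟩
    (fun c' hc' hpair => h2 c' hc' hpair.1 hpair.2)
  have hpat' : ∀ x, x < cbound k - 2 →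
      (x % 2 = 0 → τ x = 2) ∧ (x % 2 = 1 → τ x = 0) := by
    intro x hx
    exact hpat x (by omega)
  have hkey := key hrleg hrapp hτst hpat' (n := Lg + 2) (by omega) (by omega)
  have hlt : 507 * k + 4804 < 4 ^ (Lg + 1) :=
    Nat.lt_pow_succ_log_self (by norm_num) _
  have hcast : ((4:ℤ) ^ (Lg + 2 - 1)) = ((4 ^ (Lg + 1) : ℕ) : ℤ) := by push_cast; rfl
  rw [hcast] at hkey
  have hk1 : ((k - 1 : ℕ) : ℤ) ≤ (k : ℤ) := by
    have : (k - 1 : ℕ) ≤ k := by omega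
    exact_mod_cast this
  have hpow1 : (1 : ℕ) ≤ 4 ^ (Lg + 1) := Nat.one_le_pow _ _ (by norm_num)
  have hltZ : ((507 * k + 4804 : ℕ) : ℤ) < ((4 ^ (Lg + 1) : ℕ) : ℤ) := by exact_mod_cast hlt
  have hpow1Z : (1 : ℤ) ≤ ((4 ^ (Lg + 1) : ℕ) : ℤ) := by exact_mod_cast hpow1
  push_cast at hltZ
  omega
open Classical in
noncomputable def LFun (k : ℕ) : ℕ :=
  if h : ∃ s, IsAvalanche 3 k s
  then sInf {c | (∀ j ∈ h.choose, j ≤ c) ∨ (c ∈ h.choose ∧ c + 1 ∈ h.choose)}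
  else 0
lemma LFun_set_nonempty (s : List ℕ) :
    {c | (∀ j ∈ s, j ≤ c) ∨ (c ∈ s ∧ c + 1 ∈ s)}.Nonempty :=
  ⟨s.foldr max 0, Or.inl (mem_le_foldr_max s)⟩
lemma LFun_le {k : ℕ} {s : List ℕ} (hav : IsAvalanche 3 k s) : LFun k ≤ cbound k := by
  have h : ∃ s, IsAvalanche 3 k s := ⟨s, hav⟩
  rw [LFun, dif_pos h]
  rcases aval_dichotomy h.choose_spec with h1 | ⟨c', hc', hp1, hp2⟩
  · exact Nat.sInf_le (Or.inl h1)
  · exact le_trans (Nat.sInf_le (Or.inr ⟨hp1, hp2⟩)) hc'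
lemma LFun_spec {k : ℕ} {s : List ℕ} (hav : IsAvalanche 3 k s)
    (hbig : ∃ j ∈ s, LFun k < j) : LFun k ∈ s ∧ LFun k + 1 ∈ s := by
  have h : ∃ s', IsAvalanche 3 k s' := ⟨s, hav⟩
  have hse : h.choose = s := aval_unique h.choose_spec hav
  rw [LFun, dif_pos h, hse] at hbig ⊢
  have hmem := Nat.sInf_mem (LFun_set_nonempty s)
  rcases hmem with h1 | h1
  · obtain ⟨j, hj, hjlt⟩ := hbig
    exact absurd (h1 j hj) (by omega)
  · exact h1
lemma cbound_le_log {k : ℕ} (hk : 2 ≤ k) : (cbound k : ℝ) ≤ 100 * Real.log k := by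
  set X : ℕ := 507 * k + 4804 with hX
  set Lg : ℕ := Nat.log 4 X with hLg
  have hXpos : 0 < X := by omega
  have hpow : (4 : ℕ) ^ Lg ≤ X := Nat.pow_log_le_self 4 (by omega)
  have hpowR : (4 : ℝ) ^ Lg ≤ (X : ℝ) := by exact_mod_cast hpow
  have hlog4 : (1 : ℝ) ≤ Real.log 4 := by
    rw [Real.le_log_iff_exp_le (by norm_num : (0:ℝ) < 4)]
    have := Real.exp_one_lt_d9
    linarith
  have hlogpow : (Lg : ℝ) * Real.log 4 ≤ Real.log X := by
    have h1 : Real.log ((4:ℝ) ^ Lg) ≤ Real.log X :=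
      Real.log_le_log (by positivity) hpowR
    rwa [Real.log_pow] at h1
  have hLgle : (Lg : ℝ) ≤ Real.log X := by
    have h1 : (Lg : ℝ) ≤ (Lg : ℝ) * Real.log 4 :=
      le_mul_of_one_le_right (Nat.cast_nonneg Lg) hlog4
    linarith
  have hXk : X ≤ k ^ 14 := by
    calc X = 507 * k + 4804 := rfl
    _ ≤ 8192 * k := by omega
    _ = 2 ^ 13 * k := by norm_num
    _ ≤ k ^ 13 * k := by
        have := Nat.pow_le_pow_left hk 13
        exact Nat.mul_le_mul_right k this
    _ = k ^ 14 := by ring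
  have hlogX : Real.log X ≤ 14 * Real.log k := by
    have h1 : Real.log X ≤ Real.log ((k:ℝ) ^ 14) := by
      apply Real.log_le_log (by exact_mod_cast hXpos)
      exact_mod_cast hXk
    rwa [Real.log_pow] at h1
  have hlogk : (0.6931471803 : ℝ) < Real.log k := by
    have h2 : Real.log 2 ≤ Real.log k :=
      Real.log_le_log (by norm_num) (by exact_mod_cast hk)
    have := Real.log_two_gt_d9
    linarith
  have hcb : (cbound k : ℝ) = 2 * Lg + 9 := by
    rw [cbound]; push_cast; ring
  rw [hcb]
  linarith

/-- For KSPM(3) there is a function L(k) = O(log k) such that whenever the k-th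
avalanche fires some column beyond L(k), it fires both L(k) and L(k)+1. -/
theorem log_transitional_phase :
    ∃ L : ℕ → ℕ,
      (∃ C : ℝ, 0 < C ∧ ∀ k : ℕ, 2 ≤ k → (L k : ℝ) ≤ C * Real.log k) ∧
      ∀ (k : ℕ) (s : List ℕ), 1 ≤ k → IsAvalanche 3 k s →
        (∃ j ∈ s, L k < j) → (L k ∈ s ∧ L k + 1 ∈ s) := by
  refine ⟨LFun, ⟨100, by norm_num, ?_⟩, ?_⟩
  · intro k hk
    by_cases h : ∃ s, IsAvalanche 3 k s
    · obtain ⟨s, hs⟩ := h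
      calc (LFun k : ℝ) ≤ (cbound k : ℝ) := by exact_mod_cast LFun_le hs
      _ ≤ 100 * Real.log k := cbound_le_log hk
    · rw [LFun, dif_neg h]
      simp only [Nat.cast_zero]
      have : (0:ℝ) < Real.log k := by
        apply Real.log_pos
        exact_mod_cast by omega
      linarith
  · intro k s _ hav hbig
    exact LFun_spec hav hbig
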